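/- Let Θ be a nonempty set, let f_1, …, f_N : Θ → ℝ, and let z ∈ ℝ^N be a utopia reference point satisfying z_i > f_i(θ) for all θ ∈ Θ and all i. Suppose θ̄ ∈ Θ is weakly Pareto optimal, i.e., there is no θ ∈ Θ with f_i(θ) > f_i(θ̄) for all i. Define λ_i = (z_i − f_i(θ̄))^{-1} / ∑_{j=1}^N (z_j − f_j(θ̄))^{-1}, so that λ lies in the standard simplex Δ_N with λ_i > 0. Then θ̄ minimizes max_{1≤i≤N} λ_i (z_i − f_i(θ)) over θ ∈ Θ. -/
import Mathlib


/-- Coverage direction of Tchebycheff scalarization: given a utopia point `z` with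
`z i > f i θ` for all `θ, i`, every weakly Pareto optimal `θ̄` minimizes
`max_i λ i * (z i − f i θ)` for the normalized weights
`λ i = (z i − f i θ̄)⁻¹ / ∑ j (z j − f j θ̄)⁻¹`. -/
theorem tchebycheff_covers_weak_pareto (N : ℕ) (hN : 1 ≤ N) (Θ : Type*)
    (f : Fin N → Θ → ℝ) (z : Fin N → ℝ)
    (hz : ∀ θ : Θ, ∀ i, f i θ < z i)
    (θb : Θ) (hwpo : ¬ ∃ θ : Θ, ∀ i, f i θb < f i θ)
    (l : Fin N → ℝ)
    (hl : ∀ i, l i = (z i - f i θb)⁻¹ / ∑ j, (z j - f j θb)⁻¹) :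
    ∀ θ : Θ, (⨆ i, l i * (z i - f i θb)) ≤ ⨆ i, l i * (z i - f i θ) := by
  haveI : Nonempty (Fin N) := ⟨⟨0, hN⟩⟩
  set S := ∑ j, (z j - f j θb)⁻¹ with hSdef
  have hS : 0 < S := Finset.sum_pos
    (fun j _ => inv_pos.2 (sub_pos.2 (hz θb j))) Finset.univ_nonempty
  have hconst : ∀ i, l i * (z i - f i θb) = S⁻¹ := by
    intro i
    have hpos : (0 : ℝ) < z i - f i θb := sub_pos.2 (hz θb i)
    rw [hl i]
    field_simp
  have hLHS : (⨆ i, l i * (z i - f i θb)) = S⁻¹ := by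
    simp only [hconst]; exact ciSup_const
  intro θ
  push_neg at hwpo
  obtain ⟨i, hi⟩ := hwpo θ
  have hlpos : 0 < l i := by
    rw [hl i]
    exact div_pos (inv_pos.2 (sub_pos.2 (hz θb i))) hS
  have hkey : S⁻¹ ≤ l i * (z i - f i θ) := by
    rw [← hconst i]
    exact mul_le_mul_of_nonneg_left (by linarith) hlpos.le
  rw [hLHS]
  exact hkey.trans (le_ciSup (f := fun i => l i * (z i - f i θ)) (Set.Finite.bddAbove (Set.finite_range _)) i)
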